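/- Let Γ be a tracial connected fair and balanced δ-graph with vertex weighting w_V, and let H be a subgroup of ℝ₊ˣ acting on V(Γ) by graph automorphisms preserving the edge structure and edge weights such that w_V(h·v) = h·w_V(v) for all h ∈ H, v ∈ V(Γ). Then the quotient graph Γ^H, whose vertices are H-orbits with one edge [x] → [y] for each edge x → y' (y' ∈ [y]) from a fixed representative x, is a well-defined fair and balanced δ-graph. -/

import Mathlib

/-- A fair and balanced `δ`-graph: a locally finite directed multigraph with positive
edge weights, an involution on edges reversing source and target with
`w e * w (bar e) = 1`, and outgoing weight sum `δ` at every vertex. -/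
structure FBGraph (δ : ℝ) where
  V : Type
  E : Type
  s : E → V
  t : E → V
  w : E → ℝ
  w_pos : ∀ e, 0 < w e
  bar : E → E
  bar_bar : ∀ e, bar (bar e) = e
  s_bar : ∀ e, s (bar e) = t e
  t_bar : ∀ e, t (bar e) = s e
  w_bar : ∀ e, w e * w (bar e) = 1
  out_finite : ∀ x : V, {e : E | s e = x}.Finite
  sum_w : ∀ x : V, ∑ e ∈ (out_finite x).toFinset, w e = δ

/-- Paths in a directed graph given by source and target maps. -/
inductive IsPathOn {V E : Type} (s t : E → V) : V → V → List E → Prop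
  | nil (v : V) : IsPathOn s t v v []
  | cons {a c : V} {e : E} {l : List E} :
      s e = a → IsPathOn s t (t e) c l → IsPathOn s t a c (e :: l)

/-- The weight of a path: the product of its edge weights. -/
def pathWeight {E : Type} (w : E → ℝ) (l : List E) : ℝ := (l.map w).prod

theorem pathWeight_append {E : Type} (w : E → ℝ) (l₁ l₂ : List E) :
    pathWeight w (l₁ ++ l₂) = pathWeight w l₁ * pathWeight w l₂ := by
  simp [pathWeight]

theorem IsPathOn.append {V E : Type} {s t : E → V} {a b c : V} {l₁ l₂ : List E}
    (h₁ : IsPathOn s t a b l₁) (h₂ : IsPathOn s t b c l₂) :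
    IsPathOn s t a c (l₁ ++ l₂) := by
  induction h₁ with
  | nil v => simpa using h₂
  | cons hs _ ih => exact IsPathOn.cons hs (ih h₂)

theorem IsPathOn.single {V E : Type} {s t : E → V} (e : E) :
    IsPathOn s t (s e) (t e) [e] := IsPathOn.cons rfl (IsPathOn.nil _)

/-- The set of weights of loops based at `x`. -/
def loopWeights {δ : ℝ} (G : FBGraph δ) (x : G.V) : Set ℝ :=
  {r | ∃ l : List G.E, IsPathOn G.s G.t x x l ∧ pathWeight G.w l = r}

/-- Vertices of the tracial cover `Γ_tr`: pairs `[λ, v]` such that there is a path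
from `x` to `v` of weight `λ`. -/
abbrev TrV {δ : ℝ} (G : FBGraph δ) (x : G.V) : Type :=
  {p : ℝ × G.V // ∃ l : List G.E, IsPathOn G.s G.t x p.2 l ∧ pathWeight G.w l = p.1}

/-- Edges of the tracial cover: an edge out of `[λ, v]` for each edge `e` of `Γ`
with source `v`. -/
abbrev TrE {δ : ℝ} (G : FBGraph δ) (x : G.V) : Type :=
  {p : (ℝ × G.V) × G.E //
    (∃ l : List G.E, IsPathOn G.s G.t x p.1.2 l ∧ pathWeight G.w l = p.1.1) ∧
      G.s p.2 = p.1.2}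

def trS {δ : ℝ} (G : FBGraph δ) (x : G.V) (e : TrE G x) : TrV G x := ⟨e.val.1, e.prop.1⟩

def trW {δ : ℝ} (G : FBGraph δ) (x : G.V) (e : TrE G x) : ℝ := G.w e.val.2

def trT {δ : ℝ} (G : FBGraph δ) (x : G.V) (e : TrE G x) : TrV G x :=
  ⟨(e.val.1.1 * G.w e.val.2, G.t e.val.2), by
    obtain ⟨⟨l, hl, hw⟩, hs⟩ := e.prop
    refine ⟨l ++ [e.val.2], ?_, ?_⟩
    · exact hl.append (hs ▸ IsPathOn.single e.val.2)
    · rw [pathWeight_append, hw]; simp [pathWeight]⟩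

/-- The distinguished vertex `[1, x]` of the tracial cover. -/
def trBase {δ : ℝ} (G : FBGraph δ) (x : G.V) : TrV G x :=
  ⟨(1, x), ⟨[], IsPathOn.nil x, by simp [pathWeight]⟩⟩

/-- Let `Γ` be a tracial connected fair and balanced `δ`-graph with vertex weighting
`wV`, and let `H ≤ ℝ₊ˣ` act on `Γ` by weight-preserving graph automorphisms with
`wV (h · v) = h * wV v`. Then the quotient graph `Γ^H` is a well-defined fair and
balanced `δ`-graph: there is a fair and balanced `δ`-graph `Q` together with
surjections on vertices and edges identifying exactly the `H`-orbits, compatible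
with sources, targets and weights. -/
theorem quotient_graph_fair_balanced {δ : ℝ} (G : FBGraph δ) (x : G.V)
    (wV : G.V → ℝ) (hwpos : ∀ v, 0 < wV v) (hwx : wV x = 1)
    (hwV : ∀ e : G.E, G.w e = wV (G.t e) / wV (G.s e))
    (hconn : ∀ v : G.V, ∃ l : List G.E, IsPathOn G.s G.t x v l)
    (H : Subgroup ℝˣ) (hHpos : ∀ h : H, (0 : ℝ) < ((h : ℝˣ) : ℝ))
    (act : H → G.V → G.V) (actE : H → G.E → G.E)
    (act_one : ∀ v, act 1 v = v)
    (act_mul : ∀ h₁ h₂ v, act (h₁ * h₂) v = act h₁ (act h₂ v))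
    (actE_one : ∀ e, actE 1 e = e)
    (actE_mul : ∀ h₁ h₂ e, actE (h₁ * h₂) e = actE h₁ (actE h₂ e))
    (act_s : ∀ h e, G.s (actE h e) = act h (G.s e))
    (act_t : ∀ h e, G.t (actE h e) = act h (G.t e))
    (act_w : ∀ h e, G.w (actE h e) = G.w e)
    (act_bar : ∀ h e, G.bar (actE h e) = actE h (G.bar e))
    (act_wV : ∀ h v, wV (act h v) = ((h : ℝˣ) : ℝ) * wV v) :
    ∃ (Q : FBGraph δ) (πV : G.V → Q.V) (πE : G.E → Q.E),
      Function.Surjective πV ∧ Function.Surjective πE ∧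
      (∀ e, Q.s (πE e) = πV (G.s e)) ∧
      (∀ e, Q.t (πE e) = πV (G.t e)) ∧
      (∀ e, Q.w (πE e) = G.w e) ∧
      (∀ v v', πV v = πV v' ↔ ∃ h : H, act h v = v') ∧
      (∀ e e', πE e = πE e' ↔ ∃ h : H, actE h e = e') := by

  classical
  -- Equivalence relations
  let sV : Setoid G.V := ⟨fun v v' => ∃ h : H, act h v = v',
    ⟨fun v => ⟨1, act_one v⟩,
     fun {v v'} ⟨h, hh⟩ => ⟨h⁻¹, by rw [← hh, ← act_mul, inv_mul_cancel, act_one]⟩,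
     fun {a b c} ⟨h₁, hh₁⟩ ⟨h₂, hh₂⟩ => ⟨h₂ * h₁, by rw [act_mul, hh₁, hh₂]⟩⟩⟩
  let sE : Setoid G.E := ⟨fun e e' => ∃ h : H, actE h e = e',
    ⟨fun e => ⟨1, actE_one e⟩,
     fun {e e'} ⟨h, hh⟩ => ⟨h⁻¹, by rw [← hh, ← actE_mul, inv_mul_cancel, actE_one]⟩,
     fun {a b c} ⟨h₁, hh₁⟩ ⟨h₂, hh₂⟩ => ⟨h₂ * h₁, by rw [actE_mul, hh₁, hh₂]⟩⟩⟩
  -- key injectivity: h fixing a vertex is trivial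
  have hfix : ∀ (h : H) (v : G.V), act h v = v → h = 1 := by
    intro h v hv
    have := act_wV h v
    rw [hv] at this
    have h1 : ((h : ℝˣ) : ℝ) = 1 :=
      mul_right_cancel₀ (hwpos v).ne' (by rw [one_mul, ← this])
    exact Subtype.ext (Units.ext h1)
  have hfixE : ∀ (h : H) (e : G.E), G.s e = G.s (actE h e) → actE h e = e := by
    intro h e he
    have : act h (G.s e) = G.s e := by rw [← act_s, ← he]
    rw [hfix h _ this, actE_one]
  have injOut : ∀ (v : G.V) (e e' : G.E), G.s e = v → G.s e' = v →
      (⟦e⟧ : Quotient sE) = ⟦e'⟧ → e = e' := by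
    intro v e e' he he' hq
    obtain ⟨h, hh⟩ := Quotient.exact hq
    have : G.s e = G.s (actE h e) := by rw [hh, he', he]
    rw [← hh, hfixE h e this]
  -- descent of structure maps
  have sresp : ∀ e e', sE.r e e' → (⟦G.s e⟧ : Quotient sV) = ⟦G.s e'⟧ := by
    intro e e' ⟨h, hh⟩
    exact Quotient.sound ⟨h, by rw [← act_s, hh]⟩
  have tresp : ∀ e e', sE.r e e' → (⟦G.t e⟧ : Quotient sV) = ⟦G.t e'⟧ := by
    intro e e' ⟨h, hh⟩
    exact Quotient.sound ⟨h, by rw [← act_t, hh]⟩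
  have wresp : ∀ e e', sE.r e e' → G.w e = G.w e' := by
    intro e e' ⟨h, hh⟩
    rw [← hh, act_w]
  have barresp : ∀ e e', sE.r e e' → (⟦G.bar e⟧ : Quotient sE) = ⟦G.bar e'⟧ := by
    intro e e' ⟨h, hh⟩
    exact Quotient.sound ⟨h, by rw [← act_bar, hh]⟩
  -- structure of the out-star
  have outset : ∀ v : G.V, {eb : Quotient sE | Quotient.lift (fun e => (⟦G.s e⟧ : Quotient sV)) sresp eb = ⟦v⟧}
      = (fun e => (⟦e⟧ : Quotient sE)) '' {e | G.s e = v} := by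
    intro v
    ext eb
    constructor
    · intro heb
      obtain ⟨e, rfl⟩ := eb.exists_rep
      obtain ⟨h, hh⟩ := Quotient.exact (heb : (⟦G.s e⟧ : Quotient sV) = ⟦v⟧)
      refine ⟨actE h e, by rw [Set.mem_setOf_eq, act_s, hh], ?_⟩
      exact Quotient.sound (sE.symm ⟨h, rfl⟩)
    · rintro ⟨e, he, rfl⟩
      simpa using congrArg (Quotient.mk sV) he
  have outfin : ∀ q : Quotient sV,
      {eb : Quotient sE | Quotient.lift (fun e => (⟦G.s e⟧ : Quotient sV)) sresp eb = q}.Finite := by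
    intro q
    obtain ⟨v, rfl⟩ := q.exists_rep
    rw [outset v]
    exact (G.out_finite v).image _
  refine ⟨{
      V := Quotient sV, E := Quotient sE,
      s := Quotient.lift (fun e => (⟦G.s e⟧ : Quotient sV)) sresp,
      t := Quotient.lift (fun e => (⟦G.t e⟧ : Quotient sV)) tresp,
      w := Quotient.lift G.w wresp,
      w_pos := fun eb => by
        induction eb using Quotient.ind with
        | _ e => exact G.w_pos e,
      bar := Quotient.lift (fun e => (⟦G.bar e⟧ : Quotient sE)) barresp,
      bar_bar := fun eb => by
        induction eb using Quotient.ind with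
        | _ e => exact congrArg (Quotient.mk sE) (G.bar_bar e),
      s_bar := fun eb => by
        induction eb using Quotient.ind with
        | _ e => exact congrArg (Quotient.mk sV) (G.s_bar e),
      t_bar := fun eb => by
        induction eb using Quotient.ind with
        | _ e => exact congrArg (Quotient.mk sV) (G.t_bar e),
      w_bar := fun eb => by
        induction eb using Quotient.ind with
        | _ e => exact G.w_bar e,
      out_finite := outfin,
      sum_w := ?_ }, Quotient.mk sV, Quotient.mk sE,
      fun q => q.exists_rep, fun eb => eb.exists_rep,
      fun e => rfl, fun e => rfl, fun e => rfl,
      fun v v' => ⟨Quotient.exact, fun h => Quotient.sound h⟩,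
      fun e e' => ⟨Quotient.exact, fun h => Quotient.sound h⟩⟩
  intro q
  obtain ⟨v, rfl⟩ := q.exists_rep
  have hset : (outfin ⟦v⟧).toFinset
      = (G.out_finite v).toFinset.image (fun e => (⟦e⟧ : Quotient sE)) := by
    apply Finset.coe_injective
    simp [outset v]
  rw [hset, Finset.sum_image]
  · exact G.sum_w v
  · intro e he e' he' hq
    simp only [Finset.mem_coe, Set.Finite.coe_toFinset, Set.Finite.mem_toFinset, Set.mem_setOf_eq] at he he'
    exact injOut v e e' he he' hq
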